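/- Let G be a contracting self-similar subgroup of Aut(T), let h_x, h'_x ∈ G for each x ∈ X, and let π be a permutation of X. Then the unique automorphism g of T acting on X as π and whose states on the first level satisfy g|_x = h_x · g · h'_x for every x ∈ X is finite-state. -/

import Mathlib

open List

/-- Vertices of the rooted `d`-ary tree `T`: finite words over the alphabet
`X = Fin d`. -/
abbrev Vertex (d : ℕ) := List (Fin d)

/-- `g` is an automorphism of the rooted `d`-ary tree: a bijection of the
vertex set `X*` preserving word length and the prefix relation. -/
def IsTreeAut {d : ℕ} (g : Equiv.Perm (Vertex d)) : Prop :=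
  (∀ v : Vertex d, (g v).length = v.length) ∧
    ∀ v w : Vertex d, g v <+: g (v ++ w)

theorem IsTreeAut.prefix_mono {d : ℕ} {g : Equiv.Perm (Vertex d)} (hg : IsTreeAut g)
    {u u' : Vertex d} (h : u <+: u') : g u <+: g u' := by
  obtain ⟨t, rfl⟩ := h
  exact hg.2 u t

/-- The automorphism group `Aut(T)` of the rooted `d`-ary tree, as a subgroup
of the group of permutations of the vertex set. -/
def treeAut (d : ℕ) : Subgroup (Equiv.Perm (Vertex d)) where
  carrier := {g | IsTreeAut g}
  one_mem' := ⟨fun _ => rfl, fun v w => ⟨w, rfl⟩⟩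
  mul_mem' := by
    intro g h hg hh
    obtain ⟨hg1, hg2⟩ := hg
    obtain ⟨hh1, hh2⟩ := hh
    refine ⟨fun v => ?_, fun v w => ?_⟩
    · simp [Equiv.Perm.mul_apply, hg1, hh1]
    · obtain ⟨t, ht⟩ := hh2 v w
      simp only [Equiv.Perm.mul_apply]
      rw [← ht]
      exact hg2 (h v) t
  inv_mem' := by
    intro g hgmem
    obtain ⟨hg1, hg2⟩ := hgmem
    have hg : IsTreeAut g := ⟨hg1, hg2⟩
    have hlen' : ∀ v : Vertex d, (g⁻¹ v).length = v.length := by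
      intro v
      conv_rhs => rw [(Equiv.Perm.inv_eq_iff_eq (f := g) (x := v)).mp rfl]
      rw [hg1]
    refine ⟨hlen', fun v w => ?_⟩
    have hle : (g⁻¹ v).length ≤ (g⁻¹ (v ++ w)).length := by
      have h1 := hlen' v
      have h2 := hlen' (v ++ w)
      rw [List.length_append] at h2
      omega
    have htp : (g⁻¹ (v ++ w)).take (g⁻¹ v).length <+: g⁻¹ (v ++ w) :=
      List.take_prefix _ _
    have hgtp : g ((g⁻¹ (v ++ w)).take (g⁻¹ v).length) <+: v ++ w := by
      have := hg.prefix_mono htp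
      rwa [← (Equiv.Perm.inv_eq_iff_eq (f := g) (x := v ++ w)).mp rfl] at this
    have hlen_tp : (g ((g⁻¹ (v ++ w)).take (g⁻¹ v).length)).length = v.length := by
      rw [hg1, List.length_take, min_eq_left hle, hlen' v]
    have hveq : g ((g⁻¹ (v ++ w)).take (g⁻¹ v).length) = v := by
      have h1 := List.prefix_iff_eq_take.mp hgtp
      have h2 := List.prefix_iff_eq_take.mp (List.prefix_append v w)
      rw [h1, hlen_tp]
      exact h2.symm
    have hkey : (g⁻¹ (v ++ w)).take (g⁻¹ v).length = g⁻¹ v := by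
      apply g.injective
      rw [hveq, ← (Equiv.Perm.inv_eq_iff_eq (f := g) (x := v)).mp rfl]
    rw [← hkey]
    exact htp

open scoped Classical in
/-- The state (section) `g|_v` of `g` at the vertex `v` : the unique
automorphism satisfying `g (v ++ w) = g v ++ (g|_v) w` for all `w`. -/
noncomputable def state {d : ℕ} (g : Equiv.Perm (Vertex d)) (v : Vertex d) :
    Equiv.Perm (Vertex d) :=
  if h : Function.Bijective (fun w : Vertex d => (g (v ++ w)).drop v.length) then
    Equiv.ofBijective _ h
  else 1

/-- A finite-state automorphism: one having finitely many states.  The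
finite-state automorphisms form the group `F(X)`. -/
def FiniteState {d : ℕ} (g : Equiv.Perm (Vertex d)) : Prop :=
  (Set.range fun v : Vertex d => state g v).Finite

/-- The cardinality of the orbit `Orb_a(v)` of the vertex `v` under the cyclic
group generated by `a`. -/
noncomputable def orbitCard {d : ℕ} (a : Equiv.Perm (Vertex d)) (v : Vertex d) : ℕ :=
  Nat.card (Set.range fun n : ℤ => (a ^ n) v)

/-- The orbit-signalizer `OS(a) = { a^m|_v : v ∈ X^*, m = |Orb_a(v)| }`. -/
noncomputable def OS {d : ℕ} (a : Equiv.Perm (Vertex d)) : Set (Equiv.Perm (Vertex d)) :=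
  {s | ∃ v : Vertex d, s = state (a ^ orbitCard a v) v}

/-- `a` has finite orbit-signalizer. -/
def FiniteOS {d : ℕ} (a : Equiv.Perm (Vertex d)) : Prop := (OS a).Finite

/-- A self-similar (state-closed) subgroup. -/
def SelfSimilar {d : ℕ} (G : Subgroup (Equiv.Perm (Vertex d))) : Prop :=
  ∀ g ∈ G, ∀ v : Vertex d, state g v ∈ G

/-- A contracting group: there is a finite set `N ⊆ G` such that every
`g ∈ G` has all its states in `N` from some level on. -/
def ContractingGroup {d : ℕ} (G : Subgroup (Equiv.Perm (Vertex d))) : Prop :=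
  ∃ N : Set (Equiv.Perm (Vertex d)), N.Finite ∧ N ⊆ (G : Set (Equiv.Perm (Vertex d))) ∧
    ∀ g ∈ G, ∃ n : ℕ, ∀ v : Vertex d, n ≤ v.length → state g v ∈ N

/-- A contracting automorphism: the self-similar group generated by all of its
states is contracting. -/
def ContractingAut {d : ℕ} (f : Equiv.Perm (Vertex d)) : Prop :=
  ContractingGroup (Subgroup.closure (Set.range fun v : Vertex d => state f v))

/-- The activity sequence `θ_k(g)`: the number of vertices `v` of level `k`
whose state `g|_v` acts nontrivially on the first level `X`. -/
noncomputable def theta {d : ℕ} (g : Equiv.Perm (Vertex d)) (k : ℕ) : ℕ :=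
  Nat.card {v : Vertex d // v.length = k ∧ ∃ x : Fin d, state g v [x] ≠ [x]}

/-- A bounded automorphism: a finite-state automorphism with bounded activity
sequence.  The bounded automorphisms form the group `Pol(0)`. -/
def BoundedAut {d : ℕ} (g : Equiv.Perm (Vertex d)) : Prop :=
  FiniteState g ∧ ∃ C : ℕ, ∀ k : ℕ, theta g k ≤ C

/-- A polynomial automorphism (an element of `Pol(∞)`): a finite-state
automorphism whose activity sequence is polynomially bounded. -/
def PolyAut {d : ℕ} (g : Equiv.Perm (Vertex d)) : Prop :=
  FiniteState g ∧ ∃ p : Polynomial ℕ, ∀ k : ℕ, theta g k ≤ p.eval k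

/-- A finitary automorphism (an element of `Pol(-1)`): all states at some
level are trivial. -/
def Finitary {d : ℕ} (g : Equiv.Perm (Vertex d)) : Prop :=
  ∃ k : ℕ, ∀ v : Vertex d, v.length = k → state g v = 1

/-- A functionally recursive automorphism: a member of some finitely generated
self-similar subgroup of `Aut(T)`.  These form the group `FR(X)`. -/
def FunctionallyRecursive {d : ℕ} (g : Equiv.Perm (Vertex d)) : Prop :=
  ∃ G : Subgroup (Equiv.Perm (Vertex d)), G ≤ treeAut d ∧ SelfSimilar G ∧
    (∃ S : Set (Equiv.Perm (Vertex d)), S.Finite ∧ G = Subgroup.closure S) ∧ g ∈ G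
section AuxStates

variable {d : ℕ}

theorem treeAut_eq_append {g : Equiv.Perm (Vertex d)} (hg : g ∈ treeAut d) (v w : Vertex d) :
    g (v ++ w) = g v ++ (g (v ++ w)).drop v.length := by
  obtain ⟨t, ht⟩ := hg.2 v w
  rw [← ht]
  congr 1
  rw [show v.length = (g v).length from (hg.1 v).symm, List.drop_left]

theorem treeAut_state_bijective {g : Equiv.Perm (Vertex d)} (hg : g ∈ treeAut d) (v : Vertex d) :
    Function.Bijective (fun w : Vertex d => (g (v ++ w)).drop v.length) := by
  constructor
  · intro w1 w2 hw
    simp only at hw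
    have h1 := treeAut_eq_append hg v w1
    have h2 := treeAut_eq_append hg v w2
    rw [hw, ← h2] at h1
    exact List.append_cancel_left (g.injective h1)
  · intro u
    have hginv : g⁻¹ ∈ treeAut d := (treeAut d).inv_mem hg
    have key := treeAut_eq_append hginv (g v) u
    rw [show (g⁻¹ : Equiv.Perm (Vertex d)) (g v) = v from g.symm_apply_apply v] at key
    have hlen : (g v).length = v.length := hg.1 v
    rw [hlen] at key
    refine ⟨(g⁻¹ (g v ++ u)).drop v.length, ?_⟩
    simp only
    rw [← key, ← (Equiv.Perm.inv_eq_iff_eq (f := g) (x := g v ++ u)).mp rfl, show v.length = (g v).length from hlen.symm, List.drop_left]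

theorem state_apply {g : Equiv.Perm (Vertex d)} (hg : g ∈ treeAut d) (v w : Vertex d) :
    state g v w = (g (v ++ w)).drop v.length := by
  have hb := treeAut_state_bijective hg v
  rw [show state g v = Equiv.ofBijective _ hb from dif_pos hb]
  rfl

theorem state_spec {g : Equiv.Perm (Vertex d)} (hg : g ∈ treeAut d) (v w : Vertex d) :
    g (v ++ w) = g v ++ state g v w := by
  rw [state_apply hg]; exact treeAut_eq_append hg v w

theorem state_mem_treeAut {g : Equiv.Perm (Vertex d)} (hg : g ∈ treeAut d) (v : Vertex d) :
    state g v ∈ treeAut d := by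
  constructor
  · intro w
    rw [state_apply hg, List.length_drop, hg.1, List.length_append]
    omega
  · intro w w'
    have h1 := state_spec hg v w
    have h2 := state_spec hg v (w ++ w')
    have hp : g (v ++ w) <+: g (v ++ (w ++ w')) := by
      rw [← List.append_assoc]; exact hg.2 (v ++ w) w'
    rw [h1, h2] at hp
    exact (List.prefix_append_right_inj (g v)).mp hp

theorem state_one (v : Vertex d) : state (1 : Equiv.Perm (Vertex d)) v = 1 := by
  have h1 : (1 : Equiv.Perm (Vertex d)) ∈ treeAut d := (treeAut d).one_mem
  ext w
  rw [state_apply h1]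
  simp [List.drop_left]

theorem state_nil {g : Equiv.Perm (Vertex d)} (hg : g ∈ treeAut d) : state g [] = g := by
  ext w
  rw [state_apply hg]
  rfl

theorem state_mul {g k : Equiv.Perm (Vertex d)} (hg : g ∈ treeAut d) (hk : k ∈ treeAut d)
    (v : Vertex d) : state (g * k) v = state g (k v) * state k v := by
  have hgk : g * k ∈ treeAut d := mul_mem hg hk
  ext w
  simp only [Equiv.Perm.mul_apply]
  rw [state_apply hgk, state_apply hk, state_apply hg, ← treeAut_eq_append hk v w, hk.1]
  rfl

theorem state_append {g : Equiv.Perm (Vertex d)} (hg : g ∈ treeAut d) (u v : Vertex d) :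
    state g (u ++ v) = state (state g u) v := by
  have hs := state_mem_treeAut hg u
  ext w
  rw [state_apply hg, state_apply hs, state_apply hg, List.append_assoc, List.drop_drop,
    List.length_append, Nat.add_comm]

end AuxStates
open Pointwise

/-- Let `G` be a contracting self-similar subgroup of
`Aut(T)`, let `h_x, h'_x ∈ G` for each letter `x`, and let `π` be a permutation
of `X`.  The unique automorphism `g` acting on the first level as `π` whose
first-level states satisfy `g|_x = h_x · g · h'_x` (in the left-action
convention, `g|_x = h'_x * g * h_x`) is finite-state. -/
theorem recursion_with_contracting_coefficients_finiteState
    (d : ℕ) (hd : 2 ≤ d) (G : Subgroup (Equiv.Perm (Vertex d)))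
    (hG : G ≤ treeAut d) (hss : SelfSimilar G) (hc : ContractingGroup G)
    (h h' : Fin d → Equiv.Perm (Vertex d))
    (hmem : ∀ x : Fin d, h x ∈ G) (hmem' : ∀ x : Fin d, h' x ∈ G)
    (π : Equiv.Perm (Fin d))
    (g : Equiv.Perm (Vertex d)) (hg : IsTreeAut g)
    (hact : ∀ x : Fin d, g ([x] : Vertex d) = ([π x] : Vertex d))
    (hrec : ∀ x : Fin d, state g ([x] : Vertex d) = h' x * g * h x) :
    FiniteState g := by
  classical
  obtain ⟨N0, hN0fin, hN0G, hcontr⟩ := hc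
  have hgT : g ∈ treeAut d := hg
  -- elements of G are finite-state
  have hfinstate : ∀ a ∈ G, (Set.range fun v : Vertex d => state a v).Finite := by
    intro a ha
    obtain ⟨n, hn⟩ := hcontr a ha
    apply Set.Finite.subset (((List.finite_length_lt (Fin d) n).image (state a)).union hN0fin)
    rintro s ⟨v, rfl⟩
    by_cases hv : v.length < n
    · exact Or.inl ⟨v, hv, rfl⟩
    · exact Or.inr (hn v (le_of_not_gt hv))
  -- the enlarged nucleus N
  set N : Set (Equiv.Perm (Vertex d)) :=
    (N0 ∪ {1}) ∪ ((⋃ a ∈ N0, Set.range fun v : Vertex d => state a v)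
      ∪ (⋃ x : Fin d, ((Set.range fun v : Vertex d => state (h x) v)
          ∪ (Set.range fun v : Vertex d => state (h' x) v)))) with hNdef
  have hNfin : N.Finite := by
    refine (hN0fin.union (Set.finite_singleton 1)).union
      ((hN0fin.biUnion fun a ha => hfinstate a (hN0G ha)).union
        (Set.finite_iUnion fun x => (hfinstate _ (hmem x)).union (hfinstate _ (hmem' x))))
  have hNsubG : N ⊆ (G : Set (Equiv.Perm (Vertex d))) := by
    rintro a ((ha | ha) | (ha | ha))
    · exact hN0G ha
    · rw [Set.mem_singleton_iff] at ha; rw [ha]; exact G.one_mem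
    · obtain ⟨b, hb, hab⟩ := Set.mem_iUnion₂.mp ha
      obtain ⟨v, rfl⟩ := hab
      exact hss b (hN0G hb) v
    · obtain ⟨x, hx⟩ := Set.mem_iUnion.mp ha
      rcases hx with (⟨v, rfl⟩ | ⟨v, rfl⟩)
      · exact hss _ (hmem x) v
      · exact hss _ (hmem' x) v
  have hNT : ∀ a ∈ N, a ∈ treeAut d := fun a ha => hG (hNsubG ha)
  have h1N : (1 : Equiv.Perm (Vertex d)) ∈ N := Or.inl (Or.inr rfl)
  have hhN : ∀ x : Fin d, h x ∈ N := by
    intro x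
    refine Or.inr (Or.inr (Set.mem_iUnion.mpr ⟨x, Or.inl ⟨[], ?_⟩⟩))
    exact state_nil (hG (hmem x))
  have hh'N : ∀ x : Fin d, h' x ∈ N := by
    intro x
    refine Or.inr (Or.inr (Set.mem_iUnion.mpr ⟨x, Or.inr ⟨[], ?_⟩⟩))
    exact state_nil (hG (hmem' x))
  have hN0N : N0 ⊆ N := fun a ha => Or.inl (Or.inl ha)
  have hNclosed : ∀ a ∈ N, ∀ v : Vertex d, state a v ∈ N := by
    rintro a ((ha | ha) | (ha | ha)) v
    · exact Or.inr (Or.inl (Set.mem_iUnion₂.mpr ⟨a, ha, ⟨v, rfl⟩⟩))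
    · rw [Set.mem_singleton_iff] at ha; rw [ha, state_one]; exact h1N
    · obtain ⟨b, hb, hab⟩ := Set.mem_iUnion₂.mp ha
      obtain ⟨u, rfl⟩ := hab
      refine Or.inr (Or.inl (Set.mem_iUnion₂.mpr ⟨b, hb, ⟨u ++ v, ?_⟩⟩))
      show state b (u ++ v) = state (state b u) v
      exact state_append (hG (hN0G hb)) u v
    · obtain ⟨x, hx⟩ := Set.mem_iUnion.mp ha
      rcases hx with (⟨u, rfl⟩ | ⟨u, rfl⟩)
      · refine Or.inr (Or.inr (Set.mem_iUnion.mpr ⟨x, Or.inl ⟨u ++ v, ?_⟩⟩))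
        show state (h x) (u ++ v) = state (state (h x) u) v
        exact state_append (hG (hmem x)) u v
      · refine Or.inr (Or.inr (Set.mem_iUnion.mpr ⟨x, Or.inr ⟨u ++ v, ?_⟩⟩))
        show state (h' x) (u ++ v) = state (state (h' x) u) v
        exact state_append (hG (hmem' x)) u v
  clear_value N
  clear hNdef
  -- uniform contraction level L for pairs
  have hNNfin : (N * N).Finite := hNfin.mul hNfin
  have hcontr' : ∀ c ∈ N * N, ∃ n : ℕ, ∀ v : Vertex d, n ≤ v.length → state c v ∈ N0 := by
    intro c hcm
    obtain ⟨a, ha, b, hb, rfl⟩ := hcm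
    exact hcontr _ (G.mul_mem (hNsubG ha) (hNsubG hb))
  choose! f hf using hcontr'
  set L : ℕ := max 1 (hNNfin.toFinset.sup f) with hLdef
  have hL1 : 1 ≤ L := le_max_left _ _
  have hLspec : ∀ a ∈ N, ∀ b ∈ N, ∀ v : Vertex d, L ≤ v.length → state (a * b) v ∈ N0 := by
    intro a ha b hb v hv
    have hab : a * b ∈ N * N := Set.mul_mem_mul ha hb
    refine hf _ hab v (le_trans (le_trans ?_ (le_max_right _ _)) hv)
    exact Finset.le_sup (hNNfin.mem_toFinset.mpr hab)
  -- powers of N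
  have hpowG : ∀ k : ℕ, ∀ a ∈ N ^ k, a ∈ G := by
    intro k
    induction k with
    | zero => intro a ha; rw [pow_zero, Set.mem_one] at ha; rw [ha]; exact G.one_mem
    | succ k ih =>
      intro a ha
      rw [pow_succ] at ha
      obtain ⟨b, hb, c, hcn, rfl⟩ := ha
      exact G.mul_mem (ih b hb) (hNsubG hcn)
  have hpowT : ∀ k : ℕ, ∀ a ∈ N ^ k, a ∈ treeAut d := fun k a ha => hG (hpowG k a ha)
  have hpowfin : ∀ k : ℕ, (N ^ k).Finite := by
    intro k
    induction k with
    | zero => rw [pow_zero]; exact Set.finite_one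
    | succ k ih => rw [pow_succ]; exact ih.mul hNfin
  have hNsubpow : ∀ m : ℕ, N ^ m ⊆ N ^ (m + 1) := by
    intro m a ha
    rw [pow_succ']
    exact ⟨1, h1N, a, ha, one_mul a⟩
  have hpowmono : ∀ {m n : ℕ}, m ≤ n → N ^ m ⊆ N ^ n := by
    intro m n hmn
    induction hmn with
    | refl => exact fun _ hh => hh
    | step _ ih => exact ih.trans (hNsubpow _)
  have hpowclosed : ∀ k : ℕ, ∀ a ∈ N ^ k, ∀ v : Vertex d, state a v ∈ N ^ k := by
    intro k
    induction k with
    | zero =>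
      intro a ha v
      rw [pow_zero, Set.mem_one] at ha
      rw [ha, state_one, pow_zero]; exact Set.mem_one.mpr rfl
    | succ k ih =>
      intro a ha v
      rw [pow_succ] at ha ⊢
      obtain ⟨b, hb, c, hcn, rfl⟩ := ha
      rw [state_mul (hpowT k b hb) (hNT c hcn)]
      exact Set.mul_mem_mul (ih b hb _) (hNclosed c hcn v)
  -- halving lemma
  have hH : ∀ k : ℕ, ∀ a ∈ N ^ (2 * k), ∀ v : Vertex d, L ≤ v.length → state a v ∈ N ^ k := by
    intro k
    induction k with
    | zero =>
      intro a ha v _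
      rw [Nat.mul_zero, pow_zero, Set.mem_one] at ha
      rw [ha, state_one, pow_zero]; exact Set.mem_one.mpr rfl
    | succ k ih =>
      intro a ha v hv
      rw [show 2 * (k + 1) = 2 + 2 * k by ring, pow_add] at ha
      obtain ⟨b, hb, c, hcn, rfl⟩ := ha
      have hbT : b ∈ treeAut d := hpowT 2 b hb
      have hcT : c ∈ treeAut d := hpowT (2 * k) c hcn
      rw [state_mul hbT hcT v]
      have hcv : L ≤ (c v).length := by rw [hcT.1]; exact hv
      rw [pow_two] at hb
      obtain ⟨b1, hb1, b2, hb2, rfl⟩ := hb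
      have hm1 : state (b1 * b2) (c v) ∈ N := hN0N (hLspec b1 hb1 b2 hb2 (c v) hcv)
      have hm2 : state c v ∈ N ^ k := ih c hcn v hv
      rw [pow_succ']
      exact Set.mul_mem_mul hm1 hm2
  -- length-1 images
  have hsingle : ∀ (q : Equiv.Perm (Vertex d)), q ∈ treeAut d → ∀ y : Fin d,
      ∃ z : Fin d, q [y] = [z] := by
    intro q hq y
    have hl : (q [y]).length = 1 := by rw [hq.1]; rfl
    exact List.length_eq_one_iff.mp hl
  -- one-step recursion
  have hstep : ∀ (p q : Equiv.Perm (Vertex d)) (a b : ℕ), p ∈ N ^ a → q ∈ N ^ b →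
      ∀ y : Fin d, ∃ p' q', p' ∈ N ^ (a + 1) ∧ q' ∈ N ^ (b + 1) ∧
        state (p * g * q) [y] = p' * g * q' := by
    intro p q a b hp hq y
    have hpT : p ∈ treeAut d := hpowT a p hp
    have hqT : q ∈ treeAut d := hpowT b q hq
    obtain ⟨z, hz⟩ := hsingle q hqT y
    have e1 : state (p * g * q) [y] = state (p * g) (q [y]) * state q [y] :=
      state_mul (mul_mem hpT hgT) hqT [y]
    have e2 : state (p * g) (q [y]) = state p (g (q [y])) * state g (q [y]) :=
      state_mul hpT hgT _
    rw [hz] at e1 e2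
    refine ⟨state p (g [z]) * h' z, h z * state q [y], ?_, ?_, ?_⟩
    · rw [pow_succ]
      exact Set.mul_mem_mul (hpowclosed a p hp _) (hh'N z)
    · rw [pow_succ']
      exact Set.mul_mem_mul (hhN z) (hpowclosed b q hq _)
    · rw [e1, e2, hrec z]
      group
  -- states of g at any vertex
  have hAn : ∀ v : Vertex d, ∃ p q, p ∈ N ^ v.length ∧ q ∈ N ^ v.length ∧
      state g v = p * g * q := by
    intro v
    induction v using List.reverseRecOn with
    | nil =>
      refine ⟨1, 1, ?_, ?_, ?_⟩
      · rw [List.length_nil, pow_zero]; exact Set.mem_one.mpr rfl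
      · rw [List.length_nil, pow_zero]; exact Set.mem_one.mpr rfl
      · rw [state_nil hgT]; group
    | append_singleton v y ih =>
      obtain ⟨p, q, hp, hq, he⟩ := ih
      obtain ⟨p', q', hp', hq', he'⟩ := hstep p q _ _ hp hq y
      refine ⟨p', q', ?_, ?_, ?_⟩
      · rw [List.length_append, List.length_singleton]; exact hp'
      · rw [List.length_append, List.length_singleton]; exact hq'
      · rw [state_append hgT, he, he']
  -- the contraction invariant
  have hC : ∀ n : ℕ, ∀ v : Vertex d, v.length = n → ∃ p q, p ∈ N ^ (2 * L) ∧
      q ∈ N ^ (2 * L) ∧ state g v = p * g * q := by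
    intro n
    induction n using Nat.strong_induction_on with
    | _ n ih =>
      intro v hvn
      by_cases hle : v.length ≤ 2 * L
      · obtain ⟨p, q, hp, hq, he⟩ := hAn v
        exact ⟨p, q, hpowmono hle hp, hpowmono hle hq, he⟩
      · push_neg at hle
        have hvL : L ≤ v.length := by omega
        set v' := v.take (v.length - L) with hv'def
        set w := v.drop (v.length - L) with hwdef
        have hvw : v = v' ++ w := (List.take_append_drop _ _).symm
        have hv'len : v'.length = v.length - L := by
          rw [hv'def, List.length_take]; omega
        have hwlen : w.length = L := by rw [hwdef, List.length_drop]; omega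
        obtain ⟨p, q, hp, hq, he⟩ := ih (v.length - L) (by omega) v' hv'len
        have hpT : p ∈ treeAut d := hpowT _ p hp
        have hqT : q ∈ treeAut d := hpowT _ q hq
        have e0 : state g v = state (p * g * q) w := by
          rw [hvw, state_append hgT, he]
        have e1 : state (p * g * q) w = state (p * g) (q w) * state q w :=
          state_mul (mul_mem hpT hgT) hqT w
        have e2 : state (p * g) (q w) = state p (g (q w)) * state g (q w) :=
          state_mul hpT hgT _
        have hqwlen : (q w).length = L := by rw [hqT.1]; exact hwlen
        obtain ⟨p0, q0, hp0, hq0, he0⟩ := hAn (q w)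
        rw [hqwlen] at hp0 hq0
        have hm1 : state p (g (q w)) ∈ N ^ L := by
          refine hH L p hp (g (q w)) ?_
          rw [hgT.1, hqwlen]
        have hm2 : state q w ∈ N ^ L := hH L q hq w (le_of_eq hwlen.symm)
        refine ⟨state p (g (q w)) * p0, q0 * state q w, ?_, ?_, ?_⟩
        · rw [two_mul, pow_add]; exact Set.mul_mem_mul hm1 hp0
        · rw [two_mul, pow_add]; exact Set.mul_mem_mul hq0 hm2
        · rw [e0, e1, e2, he0]
          group
  -- conclusion
  have hsub : (Set.range fun v : Vertex d => state g v) ⊆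
      (fun pq : Equiv.Perm (Vertex d) × Equiv.Perm (Vertex d) => pq.1 * g * pq.2) ''
        ((N ^ (2 * L)) ×ˢ (N ^ (2 * L))) := by
    rintro s ⟨v, rfl⟩
    obtain ⟨p, q, hp, hq, he⟩ := hC v.length v rfl
    exact ⟨(p, q), ⟨hp, hq⟩, he.symm⟩
  exact Set.Finite.subset (((hpowfin _).prod (hpowfin _)).image _) hsub
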